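/- Let R be a (not necessarily commutative) ring with unit and let a₀, a₁, b₁, b₂, d, h₁, h̃₁, h₂, h̃₂, i be elements of R satisfying: d² + a₁·d + a₀ = (d − b₁)·(d − b₂), d·i = 1, d·h₁ = h₁·d + b₁·h₁, d·h₂ = h₂·d + b₂·h₂, h₁·h̃₁ = 1, and h₂·h̃₂ = 1. Then (d² + a₁·d + a₀)·h₂·i·h̃₂·h₁·i·h̃₁ = 1. -/
import Mathlib

/-- The algebraic identity underlying the variation-of-constants solution of
a reducible second-order linear ODE: in any ring, if `d² + a₁d + a₀ = (d − b₁)(d − b₂)`,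
`d·i = 1`, `d·hⱼ = hⱼ·d + bⱼ·hⱼ` and `hⱼ·h̃ⱼ = 1` for `j = 1, 2`, then
`(d² + a₁d + a₀)·h₂·i·h̃₂·h₁·i·h̃₁ = 1`. -/
theorem ode_factorization_right_inverse {R : Type*} [Ring R]
    (a₀ a₁ b₁ b₂ d h₁ h₁' h₂ h₂' i : R)
    (hfact : d ^ 2 + a₁ * d + a₀ = (d - b₁) * (d - b₂))
    (hdi : d * i = 1)
    (hdh₁ : d * h₁ = h₁ * d + b₁ * h₁)
    (hdh₂ : d * h₂ = h₂ * d + b₂ * h₂)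
    (hh₁ : h₁ * h₁' = 1)
    (hh₂ : h₂ * h₂' = 1) :
    (d ^ 2 + a₁ * d + a₀) * (h₂ * i * h₂' * h₁ * i * h₁') = 1 := by
  have k₂ : (d - b₂) * h₂ = h₂ * d := by rw [sub_mul, hdh₂]; noncomm_ring
  have k₁ : (d - b₁) * h₁ = h₁ * d := by rw [sub_mul, hdh₁]; noncomm_ring
  have e₂ : (d - b₂) * (h₂ * i * h₂') = 1 := by
    rw [show (d - b₂) * (h₂ * i * h₂') = ((d - b₂) * h₂) * i * h₂' from by noncomm_ring,
      k₂, mul_assoc h₂, hdi, mul_one, hh₂]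
  have e₁ : (d - b₁) * (h₁ * i * h₁') = 1 := by
    rw [show (d - b₁) * (h₁ * i * h₁') = ((d - b₁) * h₁) * i * h₁' from by noncomm_ring,
      k₁, mul_assoc h₁, hdi, mul_one, hh₁]
  calc (d ^ 2 + a₁ * d + a₀) * (h₂ * i * h₂' * h₁ * i * h₁')
      = (d - b₁) * ((d - b₂) * (h₂ * i * h₂')) * (h₁ * i * h₁') := by
        rw [hfact]; noncomm_ring
    _ = 1 := by rw [e₂, mul_one, e₁]
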